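/- arXiv:2603.15211 — 5 statements merged into one kernel-verified Lean document; each statement's English description precedes it below -/
import Mathlib

section
/- Let κ ∈ ℝ and let a, v, g : ℝ → 𝒮(ℝ;ℝ) be continuously differentiable curves in the Schwartz space such that for every t: (d/dt)a(t) = ∂_y v(t) and (d/dt)v(t) − ∂_y a(t) − ∂_y² v(t) = g(t). Define ℒ²(t) := ∫_ℝ (a(t)² + v(t)²) dy − 2κ ∫_ℝ v(t) ∂_y a(t) dy. Then for every t the function ℒ² is differentiable at t and (1/2)(d/dt)ℒ²(t) + κ ∫_ℝ (∂_y a(t))² dy + (1−κ) ∫_ℝ (∂_y v(t))² dy = −κ ∫_ℝ ∂_y² v(t) · ∂_y a(t) dy − κ ∫_ℝ g(t) · ∂_y a(t) dy + ∫_ℝ g(t) · v(t) dy. -/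
open MeasureTheory Filter Metric Set intervalIntegral

namespace EnergyAux

noncomputable def D (f : SchwartzMap ℝ ℝ) : SchwartzMap ℝ ℝ := SchwartzMap.derivCLM ℝ ℝ f

lemma D_apply (f : SchwartzMap ℝ ℝ) (y : ℝ) : D f y = deriv f y :=
  SchwartzMap.derivCLM_apply ℝ f y

lemma deriv_coe (f : SchwartzMap ℝ ℝ) : deriv (fun z => f z) = fun y => D f y :=
  funext fun y => (D_apply f y).symm

lemma ev_cont {c : ℝ → SchwartzMap ℝ ℝ} (hc : Continuous c) (y : ℝ) :
    Continuous fun t => c t y := by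
  have : Continuous fun t => BoundedContinuousFunction.evalCLM ℝ y
      (SchwartzMap.toBoundedContinuousFunctionCLM ℝ ℝ ℝ (c t)) :=
    ((BoundedContinuousFunction.evalCLM ℝ y).continuous.comp
      (SchwartzMap.toBoundedContinuousFunctionCLM ℝ ℝ ℝ).continuous).comp hc
  simpa [BoundedContinuousFunction.evalCLM_apply, SchwartzMap.toBoundedContinuousFunctionCLM_apply] using this

lemma D_cont {c : ℝ → SchwartzMap ℝ ℝ} (hc : Continuous c) :
    Continuous fun t => D (c t) :=
  (SchwartzMap.derivCLM ℝ ℝ).continuous.comp hc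

lemma bounded_seminorm (c : ℝ → SchwartzMap ℝ ℝ) (hc : Continuous c) (k n : ℕ)
    {K : Set ℝ} (hK : IsCompact K) :
    ∃ C, 0 ≤ C ∧ ∀ t ∈ K, SchwartzMap.seminorm ℝ k n (c t) ≤ C := by
  have hcont : Continuous fun t => SchwartzMap.seminorm ℝ k n (c t) :=
    ((schwartz_withSeminorms ℝ ℝ ℝ).continuous_seminorm (k, n)).comp hc
  obtain ⟨C, hC⟩ := hK.exists_bound_of_continuousOn hcont.continuousOn
  exact ⟨max C 0, le_max_right _ _, fun t ht =>
    (le_abs_self _).trans ((hC t ht).trans (le_max_left _ _))⟩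

lemma decay (f : SchwartzMap ℝ ℝ) (y : ℝ) :
    (1 + y ^ 2) * |f y| ≤ SchwartzMap.seminorm ℝ 0 0 f + SchwartzMap.seminorm ℝ 2 0 f := by
  have h0 : ‖f y‖ ≤ SchwartzMap.seminorm ℝ 0 0 f := SchwartzMap.norm_le_seminorm ℝ f y
  have h2 : ‖y‖ ^ 2 * ‖f y‖ ≤ SchwartzMap.seminorm ℝ 2 0 f :=
    SchwartzMap.norm_pow_mul_le_seminorm ℝ f 2 y
  rw [Real.norm_eq_abs, sq_abs, Real.norm_eq_abs] at h2
  rw [Real.norm_eq_abs] at h0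
  nlinarith [abs_nonneg (f y)]

lemma int_mul (f g : SchwartzMap ℝ ℝ) : Integrable (fun y => f y * g y) (volume : Measure ℝ) :=
  g.integrable.bdd_mul f.continuous.aestronglyMeasurable
    (ae_of_all _ fun y => SchwartzMap.norm_le_seminorm ℝ f y)

lemma ibp (f g : SchwartzMap ℝ ℝ) :
    ∫ y : ℝ, f y * D g y = - ∫ y : ℝ, D f y * g y := by
  have hu : ∀ x : ℝ, HasDerivAt f (D f x) x := fun x => by
    rw [D_apply]; exact f.differentiableAt.hasDerivAt
  have hv : ∀ x : ℝ, HasDerivAt g (D g x) x := fun x => by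
    rw [D_apply]; exact g.differentiableAt.hasDerivAt
  exact integral_mul_deriv_eq_deriv_mul_of_integrable (fun x _ => hu x) (fun x _ => hv x)
    (int_mul f (D g)) (int_mul (D f) g) (int_mul f g)

lemma curve_mul_bound (c₁ c₂ : ℝ → SchwartzMap ℝ ℝ) (h₁ : Continuous c₁) (h₂ : Continuous c₂)
    (t₀ : ℝ) :
    ∃ C, 0 ≤ C ∧ ∀ t ∈ ball t₀ 1, ∀ y : ℝ, |c₁ t y * c₂ t y| ≤ C * (1 + y ^ 2)⁻¹ := by
  obtain ⟨C₁, hC₁0, hC₁⟩ := bounded_seminorm c₁ h₁ 0 0 (isCompact_Icc (a := t₀ - 1) (b := t₀ + 1))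
  obtain ⟨C₂, hC₂0, hC₂⟩ := bounded_seminorm c₂ h₂ 0 0 (isCompact_Icc (a := t₀ - 1) (b := t₀ + 1))
  obtain ⟨C₃, hC₃0, hC₃⟩ := bounded_seminorm c₂ h₂ 2 0 (isCompact_Icc (a := t₀ - 1) (b := t₀ + 1))
  refine ⟨C₁ * (C₂ + C₃), by positivity, fun t ht y => ?_⟩
  have htI : t ∈ Icc (t₀ - 1) (t₀ + 1) := by
    rw [Real.ball_eq_Ioo] at ht; exact Ioo_subset_Icc_self ht
  have hpos : (0:ℝ) < 1 + y ^ 2 := by positivity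
  have e1 : |c₁ t y| ≤ C₁ := by
    have := SchwartzMap.norm_le_seminorm ℝ (c₁ t) y
    rw [Real.norm_eq_abs] at this
    exact this.trans (hC₁ t htI)
  have e2 : (1 + y ^ 2) * |c₂ t y| ≤ C₂ + C₃ :=
    (decay _ y).trans (add_le_add (hC₂ t htI) (hC₃ t htI))
  rw [mul_comm] at e2
  have e2' : |c₂ t y| ≤ (C₂ + C₃) * (1 + y ^ 2)⁻¹ := by
    rw [← div_eq_mul_inv, le_div_iff₀ hpos]; exact e2
  calc |c₁ t y * c₂ t y| = |c₁ t y| * |c₂ t y| := abs_mul _ _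
    _ ≤ C₁ * ((C₂ + C₃) * (1 + y ^ 2)⁻¹) := mul_le_mul e1 e2' (abs_nonneg _) hC₁0
    _ = C₁ * (C₂ + C₃) * (1 + y ^ 2)⁻¹ := (mul_assoc _ _ _).symm

lemma hasDerivAt_deriv_curve (a v : ℝ → SchwartzMap ℝ ℝ) (hcv : Continuous v)
    (hta : ∀ t y : ℝ, HasDerivAt (fun s => a s y) (D (v t) y) t) (t y : ℝ) :
    HasDerivAt (fun s => D (a s) y) (D (D (v t)) y) t := by
  have hw1 : Continuous fun τ => D (v τ) := D_cont hcv
  have hw2 : Continuous fun τ => D (D (v τ)) := D_cont hw1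
  have rep : ∀ s z : ℝ, a s z = a t z + ∫ τ in t..s, D (v τ) z := by
    intro s z
    have hcz : Continuous fun τ => D (v τ) z := ev_cont hw1 z
    have hint : ∀ s' : ℝ, HasDerivAt (fun u => ∫ τ in t..u, D (v τ) z) (D (v s') z) s' :=
      fun s' => intervalIntegral.integral_hasDerivAt_right (hcz.intervalIntegrable _ _)
        (hcz.stronglyMeasurableAtFilter _ _) hcz.continuousAt
    set φ : ℝ → ℝ := fun u => a u z - (a t z + ∫ τ in t..u, D (v τ) z) with hφ
    have hφd : ∀ u, HasDerivAt φ 0 u := fun u => by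
      have := (hta u z).sub ((hint u).const_add (a t z))
      rw [sub_self] at this; exact this
    have hconst : φ s = φ t :=
      is_const_of_deriv_eq_zero (fun x => (hφd x).differentiableAt) (fun x => (hφd x).deriv) s t
    have hzero : φ t = 0 := by simp [hφ]
    have : φ s = 0 := hconst.trans hzero
    simp only [hφ] at this
    linarith
  have key : ∀ s : ℝ, D (a s) y = D (a t) y + ∫ τ in t..s, D (D (v τ)) y := by
    intro s
    obtain ⟨C, hC0, hC⟩ := bounded_seminorm (fun τ => D (D (v τ))) hw2 0 0
      (isCompact_uIcc (a := t) (b := s))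
    have main := intervalIntegral.hasDerivAt_integral_of_dominated_loc_of_deriv_le
      (F := fun z τ => D (v τ) z) (F' := fun z τ => D (D (v τ)) z) (x₀ := y)
      (a := t) (b := s) (μ := volume) (bound := fun _ => C) (s := ball y 1) (ball_mem_nhds y one_pos)
      (Eventually.of_forall fun z => (ev_cont hw1 z).aestronglyMeasurable)
      ((ev_cont hw1 y).intervalIntegrable t s)
      (ev_cont hw2 y).aestronglyMeasurable
      (Eventually.of_forall fun τ hτ z _ => by
        have h1 : ‖D (D (v τ)) z‖ ≤ SchwartzMap.seminorm ℝ 0 0 (D (D (v τ))) :=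
          SchwartzMap.norm_le_seminorm ℝ _ z
        exact h1.trans (hC τ (uIoc_subset_uIcc hτ)))
      (intervalIntegrable_const)
      (Eventually.of_forall fun τ hτ z _ => by
        have := (D (v τ)).differentiableAt (x := z) |>.hasDerivAt
        rw [← D_apply] at this
        exact this)
    have h2 : HasDerivAt (fun z => a t z + ∫ τ in t..s, D (v τ) z)
        (D (a t) y + ∫ τ in t..s, D (D (v τ)) y) y := by
      refine HasDerivAt.add ?_ main.2
      have := (a t).differentiableAt (x := y) |>.hasDerivAt
      rw [← D_apply] at this
      exact this
    have hfun : (⇑(a s) : ℝ → ℝ) = fun z => a t z + ∫ τ in t..s, D (v τ) z := funext (rep s)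
    rw [D_apply, hfun]
    exact h2.deriv
  have hcont2 : Continuous fun τ => D (D (v τ)) y := ev_cont hw2 y
  have hFTC : HasDerivAt (fun s => D (a t) y + ∫ τ in t..s, D (D (v τ)) y)
      (D (D (v t)) y) t :=
    (intervalIntegral.integral_hasDerivAt_right (hcont2.intervalIntegrable _ _)
      (hcont2.stronglyMeasurableAtFilter _ _) hcont2.continuousAt).const_add _
  exact hFTC.congr_of_eventuallyEq (Eventually.of_forall fun s => key s)

lemma hasDerivAt_integral_curve {F F' : ℝ → ℝ → ℝ} {t₀ : ℝ}
    (hF_cont : ∀ t, Continuous (F t)) (hF'_cont : Continuous (F' t₀))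
    (hF_int : Integrable (F t₀) volume)
    {bound : ℝ → ℝ} (hbound : Integrable bound)
    (h_bound : ∀ y : ℝ, ∀ t ∈ ball t₀ 1, ‖F' t y‖ ≤ bound y)
    (h_diff : ∀ y t : ℝ, HasDerivAt (fun s => F s y) (F' t y) t) :
    HasDerivAt (fun t => ∫ y : ℝ, F t y) (∫ y : ℝ, F' t₀ y) t₀ :=
  (hasDerivAt_integral_of_dominated_loc_of_deriv_le (ball_mem_nhds t₀ one_pos)
    (Eventually.of_forall fun t => (hF_cont t).aestronglyMeasurable) hF_int
    hF'_cont.aestronglyMeasurable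
    (Eventually.of_forall fun y => h_bound y) hbound
    (Eventually.of_forall fun y t _ => h_diff y t)).2

end EnergyAux

open EnergyAux in
/-- evolution of the low-frequency energy functional
ℒ² = ‖(a,v)‖²_{L²} − 2κ∫ v a_y along solutions of the linearized system
a_t = v_y, v_t − a_y − v_yy = g (curves of Schwartz functions). -/
theorem energy_functional_evolution
    (κ : ℝ) (a v g : ℝ → SchwartzMap ℝ ℝ)
    (hca : Continuous a) (hcv : Continuous v) (hcg : Continuous g)
    (hta : ∀ t y : ℝ, HasDerivAt (fun s => a s y) (deriv (fun z => v t z) y) t)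
    (htv : ∀ t y : ℝ, HasDerivAt (fun s => v s y)
      (deriv (fun z => a t z) y + deriv (deriv (fun z => v t z)) y + g t y) t)
    (L2 : ℝ → ℝ)
    (hL2 : ∀ t : ℝ, L2 t = (∫ y : ℝ, (a t y ^ 2 + v t y ^ 2))
      - 2 * κ * ∫ y : ℝ, v t y * deriv (fun z => a t z) y) :
    ∀ t : ℝ, DifferentiableAt ℝ L2 t ∧
      (1/2) * deriv L2 t + κ * (∫ y : ℝ, (deriv (fun z => a t z) y) ^ 2)
        + (1 - κ) * (∫ y : ℝ, (deriv (fun z => v t z) y) ^ 2)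
      = -κ * (∫ y : ℝ, deriv (deriv (fun z => v t z)) y * deriv (fun z => a t z) y)
        - κ * (∫ y : ℝ, g t y * deriv (fun z => a t z) y)
        + ∫ y : ℝ, g t y * v t y := by
  simp only [deriv_coe] at hta htv hL2 ⊢
  intro t₀
  have hta' : ∀ t y : ℝ, HasDerivAt (fun s => D (a s) y) (D (D (v t)) y) t :=
    hasDerivAt_deriv_curve a v hcv hta
  obtain ⟨C₁, hC₁0, hB₁⟩ := curve_mul_bound a (fun t => D (v t)) hca (D_cont hcv) t₀
  obtain ⟨C₂, hC₂0, hB₂⟩ := curve_mul_bound v (fun t => D (a t)) hcv (D_cont hca) t₀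
  obtain ⟨C₃, hC₃0, hB₃⟩ := curve_mul_bound v (fun t => D (D (v t))) hcv
    (D_cont (D_cont hcv)) t₀
  obtain ⟨C₄, hC₄0, hB₄⟩ := curve_mul_bound v g hcv hcg t₀
  obtain ⟨C₅, hC₅0, hB₅⟩ := curve_mul_bound (fun t => D (a t)) (fun t => D (a t))
    (D_cont hca) (D_cont hca) t₀
  obtain ⟨C₆, hC₆0, hB₆⟩ := curve_mul_bound (fun t => D (D (v t))) (fun t => D (a t))
    (D_cont (D_cont hcv)) (D_cont hca) t₀
  obtain ⟨C₇, hC₇0, hB₇⟩ := curve_mul_bound g (fun t => D (a t)) hcg (D_cont hca) t₀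
  have hI1 : HasDerivAt (fun t => ∫ y : ℝ, (a t y ^ 2 + v t y ^ 2))
      (∫ y : ℝ, (2 * (a t₀ y * D (v t₀) y) + (2 * (v t₀ y * D (a t₀) y)
        + (2 * (v t₀ y * D (D (v t₀)) y) + 2 * (v t₀ y * g t₀ y))))) t₀ := by
    refine hasDerivAt_integral_curve (F := fun t y => a t y ^ 2 + v t y ^ 2)
      (F' := fun t y => (2 * (a t y * D (v t) y) + (2 * (v t y * D (a t) y)
        + (2 * (v t y * D (D (v t)) y) + 2 * (v t y * g t y)))))
      (bound := fun y => (2*C₁+2*C₂+2*C₃+2*C₄) * (1+y^2)⁻¹) ?_ ?_ ?_ ?_ ?_ ?_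
    · intro t; exact ((a t).continuous.pow 2).add ((v t).continuous.pow 2)
    · exact (continuous_const.mul ((a t₀).continuous.mul (D (v t₀)).continuous)).add
        ((continuous_const.mul ((v t₀).continuous.mul (D (a t₀)).continuous)).add
          ((continuous_const.mul ((v t₀).continuous.mul (D (D (v t₀))).continuous)).add
            (continuous_const.mul ((v t₀).continuous.mul (g t₀).continuous))))
    · simp only [pow_two]; exact (int_mul (a t₀) (a t₀)).add (int_mul (v t₀) (v t₀))
    · exact integrable_inv_one_add_sq.const_mul _
    · intro y t ht
      have h1 := abs_le.1 (hB₁ t ht y)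
      have h2 := abs_le.1 (hB₂ t ht y)
      have h3 := abs_le.1 (hB₃ t ht y)
      have h4 := abs_le.1 (hB₄ t ht y)
      rw [Real.norm_eq_abs, abs_le]
      constructor <;> [linarith; linarith]
    · intro y t
      have h := ((hta t y).pow 2).add ((htv t y).pow 2)
      refine h.congr_deriv ?_
      norm_num
      ring
  have hI2 : HasDerivAt (fun t => ∫ y : ℝ, v t y * D (a t) y)
      (∫ y : ℝ, (D (a t₀) y * D (a t₀) y + (D (D (v t₀)) y * D (a t₀) y
        + (g t₀ y * D (a t₀) y + v t₀ y * D (D (v t₀)) y)))) t₀ := by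
    refine hasDerivAt_integral_curve (F := fun t y => v t y * D (a t) y)
      (F' := fun t y => (D (a t) y * D (a t) y + (D (D (v t)) y * D (a t) y
        + (g t y * D (a t) y + v t y * D (D (v t)) y))))
      (bound := fun y => (C₅+C₆+C₇+C₃) * (1+y^2)⁻¹) ?_ ?_ ?_ ?_ ?_ ?_
    · intro t; exact (v t).continuous.mul (D (a t)).continuous
    · exact ((D (a t₀)).continuous.mul (D (a t₀)).continuous).add
        (((D (D (v t₀))).continuous.mul (D (a t₀)).continuous).add
          (((g t₀).continuous.mul (D (a t₀)).continuous).add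
            ((v t₀).continuous.mul (D (D (v t₀))).continuous)))
    · exact int_mul (v t₀) (D (a t₀))
    · exact integrable_inv_one_add_sq.const_mul _
    · intro y t ht
      have h5 := abs_le.1 (hB₅ t ht y)
      have h6 := abs_le.1 (hB₆ t ht y)
      have h7 := abs_le.1 (hB₇ t ht y)
      have h3 := abs_le.1 (hB₃ t ht y)
      rw [Real.norm_eq_abs, abs_le]
      constructor <;> [linarith; linarith]
    · intro y t
      have h := (htv t y).mul (hta' t y)
      refine h.congr_deriv ?_
      ring
  have hsplit1 : (∫ y : ℝ, (2 * (a t₀ y * D (v t₀) y) + (2 * (v t₀ y * D (a t₀) y)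
        + (2 * (v t₀ y * D (D (v t₀)) y) + 2 * (v t₀ y * g t₀ y)))))
      = 2 * (∫ y : ℝ, a t₀ y * D (v t₀) y) + (2 * (∫ y : ℝ, v t₀ y * D (a t₀) y)
        + (2 * (∫ y : ℝ, v t₀ y * D (D (v t₀)) y) + 2 * (∫ y : ℝ, v t₀ y * g t₀ y))) := by
    have e1 : Integrable (fun y : ℝ => 2 * (a t₀ y * D (v t₀) y)) volume :=
      (int_mul _ _).const_mul 2
    have e2 : Integrable (fun y : ℝ => 2 * (v t₀ y * D (a t₀) y)) volume :=
      (int_mul _ _).const_mul 2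
    have e3 : Integrable (fun y : ℝ => 2 * (v t₀ y * D (D (v t₀)) y)) volume :=
      (int_mul _ _).const_mul 2
    have e4 : Integrable (fun y : ℝ => 2 * (v t₀ y * g t₀ y)) volume :=
      (int_mul _ _).const_mul 2
    have e34 : Integrable (fun y : ℝ => 2 * (v t₀ y * D (D (v t₀)) y)
        + 2 * (v t₀ y * g t₀ y)) volume := e3.add e4
    have e234 : Integrable (fun y : ℝ => 2 * (v t₀ y * D (a t₀) y)
        + (2 * (v t₀ y * D (D (v t₀)) y) + 2 * (v t₀ y * g t₀ y))) volume := e2.add e34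
    rw [integral_add e1 e234, integral_add e2 e34, integral_add e3 e4,
      MeasureTheory.integral_const_mul _ _, MeasureTheory.integral_const_mul _ _,
      MeasureTheory.integral_const_mul _ _, MeasureTheory.integral_const_mul _ _]
  have hsplit2 : (∫ y : ℝ, (D (a t₀) y * D (a t₀) y + (D (D (v t₀)) y * D (a t₀) y
        + (g t₀ y * D (a t₀) y + v t₀ y * D (D (v t₀)) y))))
      = (∫ y : ℝ, D (a t₀) y * D (a t₀) y) + ((∫ y : ℝ, D (D (v t₀)) y * D (a t₀) y)
        + ((∫ y : ℝ, g t₀ y * D (a t₀) y) + ∫ y : ℝ, v t₀ y * D (D (v t₀)) y)) := by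
    have f1 : Integrable (fun y : ℝ => D (a t₀) y * D (a t₀) y) volume := int_mul _ _
    have f2 : Integrable (fun y : ℝ => D (D (v t₀)) y * D (a t₀) y) volume := int_mul _ _
    have f3 : Integrable (fun y : ℝ => g t₀ y * D (a t₀) y) volume := int_mul _ _
    have f4 : Integrable (fun y : ℝ => v t₀ y * D (D (v t₀)) y) volume := int_mul _ _
    have f34 : Integrable (fun y : ℝ => g t₀ y * D (a t₀) y
        + v t₀ y * D (D (v t₀)) y) volume := f3.add f4
    have f234 : Integrable (fun y : ℝ => D (D (v t₀)) y * D (a t₀) y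
        + (g t₀ y * D (a t₀) y + v t₀ y * D (D (v t₀)) y)) volume := f2.add f34
    rw [integral_add f1 f234, integral_add f2 f34, integral_add f3 f4]
  have hL2fun : L2 = fun t => (∫ y : ℝ, (a t y ^ 2 + v t y ^ 2))
      - 2 * κ * ∫ y : ℝ, v t y * D (a t) y := funext fun t => hL2 t
  have hDL2 : HasDerivAt L2
      ((∫ y : ℝ, (2 * (a t₀ y * D (v t₀) y) + (2 * (v t₀ y * D (a t₀) y)
        + (2 * (v t₀ y * D (D (v t₀)) y) + 2 * (v t₀ y * g t₀ y)))))
      - 2 * κ * (∫ y : ℝ, (D (a t₀) y * D (a t₀) y + (D (D (v t₀)) y * D (a t₀) y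
        + (g t₀ y * D (a t₀) y + v t₀ y * D (D (v t₀)) y))))) t₀ := by
    rw [hL2fun]
    exact hI1.sub (HasDerivAt.const_mul (2*κ) hI2)
  refine ⟨hDL2.differentiableAt, ?_⟩
  rw [hDL2.deriv, hsplit1, hsplit2, ibp (a t₀) (v t₀), ibp (v t₀) (D (v t₀)),
    show (∫ y : ℝ, v t₀ y * D (a t₀) y) = ∫ y : ℝ, D (a t₀) y * v t₀ y from by
      congr 1; ext y; ring,
    show (∫ y : ℝ, v t₀ y * g t₀ y) = ∫ y : ℝ, g t₀ y * v t₀ y from by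
      congr 1; ext y; ring]
  simp only [pow_two]
  ring
end

section
/- Let v, a ∈ 𝒮(ℝ;ℝ) be Schwartz functions and let R > 0. Assume that the Fourier transform of v is supported in the set {ξ ∈ ℝ : |ξ| ≤ R}. Then |∫_ℝ v''(y) a'(y) dy| ≤ (1/2)‖a'‖²_{L²} + 2π²R² ‖v'‖²_{L²}. -/
open MeasureTheory Complex
open scoped FourierTransform Real

noncomputable section

namespace BYaux

/-- Complex lift of a real Schwartz function. -/
def ofRealS (v : SchwartzMap ℝ ℝ) : SchwartzMap ℝ ℂ where
  toFun x := (v x : ℂ)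
  smooth' := Complex.ofRealCLM.contDiff.comp v.smooth'
  decay' := by
    intro k n
    obtain ⟨C, hC⟩ := v.decay' k n
    refine ⟨C, fun x => ?_⟩
    have h : ‖iteratedFDeriv ℝ n (⇑Complex.ofRealLI ∘ ⇑v) x‖ = ‖iteratedFDeriv ℝ n (⇑v) x‖ :=
      Complex.ofRealLI.norm_iteratedFDeriv_comp_left (x := x) v.smooth'.contDiffAt (by exact_mod_cast le_top)
    have h2 : (fun y : ℝ => ((v y : ℝ) : ℂ)) = ⇑Complex.ofRealLI ∘ ⇑v := rfl
    rw [h2, h]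
    exact hC x

@[simp] lemma ofRealS_apply (v : SchwartzMap ℝ ℝ) (x : ℝ) : ofRealS v x = (v x : ℂ) := rfl

lemma integrable_normsq (f : SchwartzMap ℝ ℂ) :
    Integrable (fun x : ℝ => ‖f x‖ ^ 2) := by
  have h := (f.integrable (μ := volume)).norm.bdd_mul
    (f.continuous.norm.aestronglyMeasurable)
    (c := ‖f.toBoundedContinuousFunction‖) (ae_of_all _ fun x => by
      simpa using f.toBoundedContinuousFunction.norm_coe_le_norm x)
  simpa [pow_two] using h

lemma plancherel (f : SchwartzMap ℝ ℂ) :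
    ∫ ξ : ℝ, ‖𝓕 (⇑f) ξ‖ ^ 2 = ∫ x : ℝ, ‖f x‖ ^ 2 := by
  set F := SchwartzMap.fourierTransformCLM ℂ f with hFdef
  have hF : ⇑F = 𝓕 ⇑f := rfl
  have hfi : Integrable (⇑f) := f.integrable
  have hFi : Integrable (⇑F) := F.integrable
  have hgi : Integrable (fun ξ => (starRingEnd ℂ) (F ξ)) := by
    refine ⟨(continuous_star.comp F.continuous).aestronglyMeasurable, ?_⟩
    simpa [HasFiniteIntegral] using hFi.2
  have hinv : 𝓕⁻ (⇑F) = ⇑f := by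
    rw [hF]; exact f.continuous.fourierInv_fourier_eq hfi (hF ▸ hFi)
  have hfourier_g : ∀ x : ℝ, 𝓕 (fun ξ => (starRingEnd ℂ) (F ξ)) x = (starRingEnd ℂ) (f x) := by
    intro x
    rw [Real.fourier_eq']
    have key : ∀ v : ℝ,
        cexp (Complex.ofReal (-2 * π * (inner ℝ v x : ℝ)) * I) • (starRingEnd ℂ) (F v)
        = (starRingEnd ℂ) (cexp (Complex.ofReal (2 * π * (inner ℝ v x : ℝ)) * I) • F v) := by
      intro v
      simp only [smul_eq_mul, map_mul, ← Complex.exp_conj, Complex.conj_ofReal, Complex.conj_I]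
      push_cast
      ring_nf
    calc (∫ v : ℝ, cexp (Complex.ofReal (-2 * π * (inner ℝ v x : ℝ)) * I) • (starRingEnd ℂ) (F v))
        = ∫ v : ℝ, (starRingEnd ℂ) (cexp (Complex.ofReal (2 * π * (inner ℝ v x : ℝ)) * I) • F v) := by
          simp_rw [key]
      _ = (starRingEnd ℂ) (∫ v : ℝ, cexp (Complex.ofReal (2 * π * (inner ℝ v x : ℝ)) * I) • F v) :=
          integral_conj
      _ = (starRingEnd ℂ) (𝓕⁻ (⇑F) x) := by rw [← Real.fourierInv_eq']
      _ = (starRingEnd ℂ) (f x) := by rw [hinv]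
  have flip := VectorFourier.integral_fourierIntegral_smul_eq_flip (L := innerₗ ℝ)
      Real.continuous_fourierChar continuous_inner hfi hgi
  simp only [flip_innerₗ] at flip
  have flipₑ : (∫ ξ : ℝ, (𝓕 ⇑f) ξ * (starRingEnd ℂ) (F ξ))
      = ∫ x : ℝ, f x * (starRingEnd ℂ) (f x) := by
    calc (∫ ξ : ℝ, (𝓕 ⇑f) ξ * (starRingEnd ℂ) (F ξ))
        = ∫ x : ℝ, f x * 𝓕 (fun ξ => (starRingEnd ℂ) (F ξ)) x := flip
      _ = ∫ x : ℝ, f x * (starRingEnd ℂ) (f x) := by simp_rw [hfourier_g]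
  have lhs : (∫ ξ : ℝ, (𝓕 ⇑f) ξ * (starRingEnd ℂ) (F ξ))
      = Complex.ofReal (∫ ξ : ℝ, ‖𝓕 (⇑f) ξ‖ ^ 2) := by
    calc (∫ ξ : ℝ, (𝓕 ⇑f) ξ * (starRingEnd ℂ) (F ξ))
        = ∫ ξ : ℝ, ((‖𝓕 (⇑f) ξ‖ ^ 2 : ℝ) : ℂ) := by
          congr 1; ext ξ; rw [← hF, RCLike.mul_conj]; norm_cast
      _ = Complex.ofReal (∫ ξ : ℝ, ‖𝓕 (⇑f) ξ‖ ^ 2) := integral_ofReal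
  have rhs : (∫ x : ℝ, f x * (starRingEnd ℂ) (f x))
      = Complex.ofReal (∫ x : ℝ, ‖f x‖ ^ 2) := by
    calc (∫ x : ℝ, f x * (starRingEnd ℂ) (f x))
        = ∫ x : ℝ, ((‖f x‖ ^ 2 : ℝ) : ℂ) := by
          congr 1; ext x; rw [RCLike.mul_conj]; norm_cast
      _ = Complex.ofReal (∫ x : ℝ, ‖f x‖ ^ 2) := integral_ofReal
  have : Complex.ofReal (∫ ξ : ℝ, ‖𝓕 (⇑f) ξ‖ ^ 2) = Complex.ofReal (∫ x : ℝ, ‖f x‖ ^ 2) := by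
    rw [← lhs, flipₑ, rhs]
  exact_mod_cast this

lemma bernstein (w : SchwartzMap ℝ ℂ) (R : ℝ) (hR : 0 < R)
    (hsupp : ∀ ξ : ℝ, R < |ξ| → 𝓕 (⇑w) ξ = 0) :
    ∫ y : ℝ, ‖deriv (⇑w) y‖ ^ 2 ≤ 4 * π ^ 2 * R ^ 2 * ∫ y : ℝ, ‖w y‖ ^ 2 := by
  set w' := SchwartzMap.derivCLM ℝ ℂ w with hw'def
  have hw' : ⇑w' = deriv ⇑w := rfl
  have hD : 𝓕 (deriv ⇑w) = fun ξ : ℝ => (2 * ↑π * I * ↑ξ) • 𝓕 (⇑w) ξ :=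
    Real.fourier_deriv w.integrable w.differentiable (hw' ▸ w'.integrable)
  have step1 : ∫ y : ℝ, ‖deriv (⇑w) y‖ ^ 2 = ∫ ξ : ℝ, ‖𝓕 (deriv ⇑w) ξ‖ ^ 2 := by
    rw [← hw', plancherel w']
  have FTw : ⇑(SchwartzMap.fourierTransformCLM ℂ w) = 𝓕 ⇑w := rfl
  have FTw' : ⇑(SchwartzMap.fourierTransformCLM ℂ w') = 𝓕 (deriv ⇑w) := by rw [← hw']; rfl
  have step2 : ∫ ξ : ℝ, ‖𝓕 (deriv ⇑w) ξ‖ ^ 2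
      ≤ ∫ ξ : ℝ, 4 * π ^ 2 * R ^ 2 * ‖𝓕 (⇑w) ξ‖ ^ 2 := by
    have i1 : Integrable (fun ξ : ℝ => ‖𝓕 (deriv ⇑w) ξ‖ ^ 2) := by
      rw [← FTw']; exact integrable_normsq _
    have i2 : Integrable (fun ξ : ℝ => 4 * π ^ 2 * R ^ 2 * ‖𝓕 (⇑w) ξ‖ ^ 2) := by
      apply Integrable.const_mul
      rw [← FTw]; exact integrable_normsq _
    apply integral_mono i1 i2
    intro ξ
    simp only [hD]
    rcases le_or_gt |ξ| R with h | h
    · have : ‖(2 * ↑π * I * ↑ξ) • 𝓕 (⇑w) ξ‖ = (2 * π * |ξ|) * ‖𝓕 (⇑w) ξ‖ := by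
        rw [norm_smul]
        simp [abs_of_pos Real.pi_pos, mul_assoc]
      rw [this]
      have hnn : (0:ℝ) ≤ ‖𝓕 (⇑w) ξ‖ := norm_nonneg _
      have hπ : (0:ℝ) < π := Real.pi_pos
      nlinarith [mul_le_mul_of_nonneg_right (mul_self_le_mul_self (abs_nonneg ξ) h) (sq_nonneg ‖𝓕 (⇑w) ξ‖), sq_nonneg π, mul_pos hπ hπ]
    · simp only [hsupp ξ h, smul_zero, norm_zero]
      have : (0:ℝ) ^ 2 = 0 := by norm_num
      rw [this]
      positivity
  have step3 : ∫ ξ : ℝ, 4 * π ^ 2 * R ^ 2 * ‖𝓕 (⇑w) ξ‖ ^ 2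
      = 4 * π ^ 2 * R ^ 2 * ∫ ξ : ℝ, ‖𝓕 (⇑w) ξ‖ ^ 2 := integral_const_mul _ _
  rw [step1]
  rw [step3] at step2
  calc ∫ ξ : ℝ, ‖𝓕 (deriv ⇑w) ξ‖ ^ 2 ≤ 4 * π ^ 2 * R ^ 2 * ∫ ξ : ℝ, ‖𝓕 (⇑w) ξ‖ ^ 2 := step2
    _ = 4 * π ^ 2 * R ^ 2 * ∫ y : ℝ, ‖w y‖ ^ 2 := by rw [plancherel w]

lemma integrable_sq (g : SchwartzMap ℝ ℝ) : Integrable (fun x : ℝ => (g x) ^ 2) := by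
  have h := integrable_normsq (ofRealS g)
  have : (fun x : ℝ => ‖(ofRealS g) x‖ ^ 2) = fun x : ℝ => (g x) ^ 2 := by
    ext x
    simp [Real.norm_eq_abs, _root_.sq_abs]
  rwa [this] at h

lemma integrable_mul (g h : SchwartzMap ℝ ℝ) : Integrable (fun x : ℝ => g x * h x) :=
  (h.integrable).bdd_mul g.continuous.aestronglyMeasurable
    (c := ‖g.toBoundedContinuousFunction‖) (ae_of_all _ fun x => by
      simpa using g.toBoundedContinuousFunction.norm_coe_le_norm x)

end BYaux

end

open BYaux

/-- Bernstein-type bound combined with Young's inequality for a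
spectrally localized Schwartz function v (Fourier support in {|ξ| ≤ R}):
|∫ v'' a'| ≤ (1/2)‖a'‖²_{L²} + 2π²R²‖v'‖²_{L²}. -/
theorem bernstein_young_spectral_bound
    (v a : SchwartzMap ℝ ℝ) (R : ℝ) (hR : 0 < R)
    (hsupp : ∀ ξ : ℝ, R < |ξ| → 𝓕 (fun y => (v y : ℂ)) ξ = 0) :
    |∫ y : ℝ, deriv (deriv (fun z => v z)) y * deriv (fun z => a z) y|
      ≤ (1/2) * (∫ y : ℝ, (deriv (fun z => a z) y) ^ 2)
        + 2 * Real.pi ^ 2 * R ^ 2 * ∫ y : ℝ, (deriv (fun z => v z) y) ^ 2 := by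
  set v1 := SchwartzMap.derivCLM ℝ ℝ v with hv1def
  set v2 := SchwartzMap.derivCLM ℝ ℝ v1 with hv2def
  set a1 := SchwartzMap.derivCLM ℝ ℝ a with ha1def
  have hv1c : ⇑v1 = deriv (fun z => v z) := rfl
  have hv2c : ⇑v2 = deriv (deriv (fun z => v z)) := by rw [← hv1c]; rfl
  have ha1c : ⇑a1 = deriv (fun z => a z) := rfl
  rw [← hv2c, ← ha1c, ← hv1c]
  -- the complex lift of v1 is the derivative of the complex lift of v
  have hlift : ⇑(ofRealS v1) = deriv (fun y : ℝ => (v y : ℂ)) := by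
    ext y
    rw [ofRealS_apply, ((v.differentiable y).hasDerivAt.ofReal_comp).deriv]
    rfl
  -- Fourier support of the lift of v1
  have hs1 : ∀ ξ : ℝ, R < |ξ| → 𝓕 (⇑(ofRealS v1)) ξ = 0 := by
    intro ξ hξ
    rw [hlift]
    have hder : 𝓕 (deriv (fun y : ℝ => (v y : ℂ)))
        = fun ξ : ℝ => (2 * ↑π * I * ↑ξ) • 𝓕 (fun y : ℝ => (v y : ℂ)) ξ := by
      have h0v : ⇑(ofRealS v) = fun y : ℝ => (v y : ℂ) := by ext y; simp
      have h1 : Integrable (fun y : ℝ => (v y : ℂ)) := h0v ▸ (ofRealS v).integrable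
      have h2 : Differentiable ℝ (fun y : ℝ => (v y : ℂ)) := h0v ▸ (ofRealS v).differentiable
      have h3 : Integrable (deriv (fun y : ℝ => (v y : ℂ))) := by
        rw [← hlift]; exact (ofRealS v1).integrable
      exact Real.fourier_deriv h1 h2 h3
    rw [hder]
    simp [hsupp ξ hξ]
  -- Bernstein bound
  have hbern := bernstein (ofRealS v1) R hR hs1
  have e1 : (∫ y : ℝ, ‖deriv (⇑(ofRealS v1)) y‖ ^ 2) = ∫ y : ℝ, (v2 y) ^ 2 := by
    congr 1; ext y
    have : deriv (⇑(ofRealS v1)) y = ((v2 y : ℝ) : ℂ) := by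
      have h0 : ⇑(ofRealS v1) = fun t : ℝ => ((v1 t : ℝ) : ℂ) := by ext t; simp
      rw [h0, ((v1.differentiable y).hasDerivAt.ofReal_comp).deriv]
      rfl
    rw [this]
    simp [Real.norm_eq_abs, _root_.sq_abs]
  have e2 : (∫ y : ℝ, ‖(ofRealS v1) y‖ ^ 2) = ∫ y : ℝ, (v1 y) ^ 2 := by
    congr 1; ext y
    simp [Real.norm_eq_abs, _root_.sq_abs]
  rw [e1, e2] at hbern
  -- Young / AM-GM
  have young : |∫ y : ℝ, v2 y * a1 y|
      ≤ (1/2) * (∫ y : ℝ, (a1 y) ^ 2) + (1/2) * ∫ y : ℝ, (v2 y) ^ 2 := by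
    have h1 : |∫ y : ℝ, v2 y * a1 y| ≤ ∫ y : ℝ, |v2 y * a1 y| := by
      have h := norm_integral_le_integral_norm (μ := volume) (fun y : ℝ => v2 y * a1 y)
      simp only [Real.norm_eq_abs] at h
      exact h
    have h2 : (∫ y : ℝ, |v2 y * a1 y|)
        ≤ ∫ y : ℝ, ((1/2) * (a1 y) ^ 2 + (1/2) * (v2 y) ^ 2) := by
      apply integral_mono (integrable_mul v2 a1).abs
        (((integrable_sq a1).const_mul _).add ((integrable_sq v2).const_mul _))
      intro y
      simp only [Pi.add_apply, abs_mul]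
      nlinarith [sq_nonneg (|v2 y| - |a1 y|), _root_.sq_abs (v2 y), _root_.sq_abs (a1 y),
        abs_nonneg (v2 y), abs_nonneg (a1 y)]
    have h3 : (∫ y : ℝ, ((1/2) * (a1 y) ^ 2 + (1/2) * (v2 y) ^ 2))
        = (1/2) * (∫ y : ℝ, (a1 y) ^ 2) + (1/2) * ∫ y : ℝ, (v2 y) ^ 2 := by
      rw [integral_add ((integrable_sq a1).const_mul _) ((integrable_sq v2).const_mul _),
        integral_const_mul, integral_const_mul]
    linarith
  linarith
end

section
/- Let T > 0, λ ≥ 0, let f : [0,T] → ℝ be continuous and nonnegative with f² differentiable on [0,T], and let g : [0,T] → ℝ be continuous and nonnegative. Assume that for every t ∈ [0,T]: (1/2)(f²)'(t) + λ f(t)² ≤ g(t) f(t). Then f(T) + λ ∫₀ᵀ f(τ) dτ ≤ f(0) + ∫₀ᵀ g(τ) dτ. -/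
/-- integration of the differential inequality
(1/2)(f²)' + λf² ≤ g f for a continuous nonnegative f (which may vanish):
f(T) + λ∫₀ᵀ f ≤ f(0) + ∫₀ᵀ g. -/
theorem integrate_energy_inequality
    (T lam : ℝ) (hT : 0 < T) (hlam : 0 ≤ lam)
    (f g d : ℝ → ℝ)
    (hfc : ContinuousOn f (Set.Icc 0 T)) (hf0 : ∀ t ∈ Set.Icc (0:ℝ) T, 0 ≤ f t)
    (hgc : ContinuousOn g (Set.Icc 0 T)) (hg0 : ∀ t ∈ Set.Icc (0:ℝ) T, 0 ≤ g t)
    (hd : ∀ t ∈ Set.Icc (0:ℝ) T,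
      HasDerivWithinAt (fun s => f s ^ 2) (d t) (Set.Icc 0 T) t)
    (hineq : ∀ t ∈ Set.Icc (0:ℝ) T, (1/2) * d t + lam * f t ^ 2 ≤ g t * f t) :
    f T + lam * ∫ τ in (0:ℝ)..T, f τ ≤ f 0 + ∫ τ in (0:ℝ)..T, g τ := by
  set I := Set.Icc (0:ℝ) T with hI
  -- continuous extensions of f and g to all of ℝ
  set fe : ℝ → ℝ := fun t => (Set.Icc (0:ℝ) T).restrict f (Set.projIcc 0 T hT.le t) with hfe
  set ge : ℝ → ℝ := fun t => (Set.Icc (0:ℝ) T).restrict g (Set.projIcc 0 T hT.le t) with hge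
  have hfe_cont : Continuous fe := hfc.restrict.comp continuous_projIcc
  have hge_cont : Continuous ge := hgc.restrict.comp continuous_projIcc
  have hfe_eq : ∀ t ∈ I, fe t = f t := by
    intro t ht
    simp [hfe, Set.projIcc_of_mem hT.le ht, Set.restrict]
  have hge_eq : ∀ t ∈ I, ge t = g t := by
    intro t ht
    simp [hge, Set.projIcc_of_mem hT.le ht, Set.restrict]
  have hfe_int : ∫ τ in (0:ℝ)..T, fe τ = ∫ τ in (0:ℝ)..T, f τ := by
    apply intervalIntegral.integral_congr
    intro t ht
    exact hfe_eq t (by rwa [Set.uIcc_of_le hT.le] at ht)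
  have hge_int : ∫ τ in (0:ℝ)..T, ge τ = ∫ τ in (0:ℝ)..T, g τ := by
    apply intervalIntegral.integral_congr
    intro t ht
    exact hge_eq t (by rwa [Set.uIcc_of_le hT.le] at ht)
  -- primitives
  have hprim_f : ∀ t : ℝ, HasDerivAt (fun s => ∫ τ in (0:ℝ)..s, fe τ) (fe t) t := by
    intro t
    exact intervalIntegral.integral_hasDerivAt_right
      (hfe_cont.intervalIntegrable _ _)
      (hfe_cont.stronglyMeasurable.stronglyMeasurableAtFilter)
      hfe_cont.continuousAt
  have hprim_g : ∀ t : ℝ, HasDerivAt (fun s => ∫ τ in (0:ℝ)..s, ge τ) (ge t) t := by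
    intro t
    exact intervalIntegral.integral_hasDerivAt_right
      (hge_cont.intervalIntegrable _ _)
      (hge_cont.stronglyMeasurable.stronglyMeasurableAtFilter)
      hge_cont.continuousAt
  -- key ε-regularized estimate
  have key : ∀ ε : ℝ, 0 < ε →
      f T + lam * ∫ τ in (0:ℝ)..T, f τ ≤
        f 0 + (∫ τ in (0:ℝ)..T, g τ) + ε * (1 + lam * T) := by
    intro ε hε
    set h : ℝ → ℝ := fun t => Real.sqrt (f t ^ 2 + ε ^ 2) with hh
    set F : ℝ → ℝ := fun t =>
      h t + lam * (∫ τ in (0:ℝ)..t, fe τ) - (∫ τ in (0:ℝ)..t, ge τ) - lam * ε * t with hF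
    have hFcont : ContinuousOn F I := by
      apply ContinuousOn.sub
      apply ContinuousOn.sub
      apply ContinuousOn.add
      · exact Real.continuous_sqrt.comp_continuousOn
          (((hfc.pow 2).add continuousOn_const))
      · exact (continuous_const.mul
          (continuous_iff_continuousAt.2 fun t => (hprim_f t).continuousAt)).continuousOn
      · exact (continuous_iff_continuousAt.2 fun t => (hprim_g t).continuousAt).continuousOn
      · exact (continuous_const.mul continuous_id).continuousOn
    have hFderiv : ∀ t ∈ Set.Ioo (0:ℝ) T,
        HasDerivAt F (1 / (2 * Real.sqrt (f t ^ 2 + ε ^ 2)) * d t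
          + lam * fe t - ge t - lam * ε) t := by
      intro t ht
      have hmem : I ∈ nhds t := Icc_mem_nhds ht.1 ht.2
      have htI : t ∈ I := ⟨ht.1.le, ht.2.le⟩
      have hu : HasDerivAt (fun s => f s ^ 2 + ε ^ 2) (d t) t := by
        simpa using (((hd t htI).hasDerivAt hmem).add_const (ε ^ 2))
      have hpos : (0:ℝ) < f t ^ 2 + ε ^ 2 := by positivity
      have hsq : HasDerivAt h (1 / (2 * Real.sqrt (f t ^ 2 + ε ^ 2)) * d t) t :=
        (Real.hasDerivAt_sqrt hpos.ne').comp t hu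
      exact (((hsq.add ((hprim_f t).const_mul lam)).sub (hprim_g t)).sub
        ((hasDerivAt_id t).const_mul (lam * ε))).congr_deriv (by ring)
    have hFderiv_nonpos : ∀ t ∈ Set.Ioo (0:ℝ) T,
        1 / (2 * Real.sqrt (f t ^ 2 + ε ^ 2)) * d t + lam * fe t - ge t - lam * ε ≤ 0 := by
      intro t ht
      have htI : t ∈ I := ⟨ht.1.le, ht.2.le⟩
      rw [hfe_eq t htI, hge_eq t htI]
      set h0 := Real.sqrt (f t ^ 2 + ε ^ 2) with hh0
      have hf_nonneg : 0 ≤ f t := hf0 t htI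
      have hg_nonneg : 0 ≤ g t := hg0 t htI
      have hpos : (0:ℝ) < f t ^ 2 + ε ^ 2 := by positivity
      have h0pos : 0 < h0 := Real.sqrt_pos.2 hpos
      have h0sq : h0 ^ 2 = f t ^ 2 + ε ^ 2 := Real.sq_sqrt hpos.le
      have hfh : f t ≤ h0 := by
        nlinarith [h0sq, h0pos, sq_nonneg (h0 - f t), sq_nonneg ε]
      have hhf : h0 ≤ f t + ε := by
        nlinarith [h0sq, sq_nonneg (h0 - f t - ε), hε.le]
      have hkey : d t ≤ 2 * (g t * f t - lam * f t ^ 2) := by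
        have := hineq t htI; linarith
      have hdiv : d t / (2 * h0) ≤ g t + lam * ε - lam * f t := by
        rw [div_le_iff₀ (by positivity)]
        nlinarith [mul_nonneg hlam (mul_nonneg hf_nonneg (sub_nonneg.2 hfh)),
          mul_nonneg hg_nonneg (sub_nonneg.2 hfh),
          mul_nonneg (mul_nonneg hlam hf_nonneg) hε.le,
          mul_nonneg hlam (mul_nonneg hε.le (sub_nonneg.2 hfh))]
      have : 1 / (2 * h0) * d t = d t / (2 * h0) := by ring
      rw [this]
      linarith
    have hanti : AntitoneOn F I := by
      apply antitoneOn_of_deriv_nonpos (convex_Icc 0 T) hFcont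
      · intro t ht
        rw [interior_Icc] at ht
        exact (hFderiv t ht).differentiableAt.differentiableWithinAt
      · intro t ht
        rw [interior_Icc] at ht
        rw [(hFderiv t ht).deriv]
        exact hFderiv_nonpos t ht
    have hFT : F T ≤ F 0 := hanti (Set.left_mem_Icc.2 hT.le) (Set.right_mem_Icc.2 hT.le) hT.le
    have hF0 : F 0 = Real.sqrt (f 0 ^ 2 + ε ^ 2) := by
      simp [hF, hh, intervalIntegral.integral_same]
    have hFTval : F T = Real.sqrt (f T ^ 2 + ε ^ 2)
        + lam * (∫ τ in (0:ℝ)..T, f τ) - (∫ τ in (0:ℝ)..T, g τ) - lam * ε * T := by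
      simp [hF, hh, hfe_int, hge_int]
    have hfT_le : f T ≤ Real.sqrt (f T ^ 2 + ε ^ 2) := by
      have := Real.sqrt_le_sqrt (show f T ^ 2 ≤ f T ^ 2 + ε ^ 2 by nlinarith [sq_nonneg ε])
      rwa [Real.sqrt_sq (hf0 T (Set.right_mem_Icc.2 hT.le))] at this
    have hf0_le : Real.sqrt (f 0 ^ 2 + ε ^ 2) ≤ f 0 + ε := by
      have h00 : 0 ≤ f 0 := hf0 0 (Set.left_mem_Icc.2 hT.le)
      rw [show f 0 ^ 2 + ε ^ 2 = (f 0 + ε)^2 - 2 * f 0 * ε by ring]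
      calc Real.sqrt ((f 0 + ε)^2 - 2 * f 0 * ε) ≤ Real.sqrt ((f 0 + ε)^2) :=
            Real.sqrt_le_sqrt (by nlinarith)
        _ = f 0 + ε := Real.sqrt_sq (by positivity)
    rw [hFTval, hF0] at hFT
    nlinarith [mul_nonneg hlam hT.le]
  -- pass to the limit ε → 0
  apply le_of_forall_pos_le_add
  intro ε hε
  have h1T : (0:ℝ) < 1 + lam * T := by positivity
  have := key (ε / (1 + lam * T)) (by positivity)
  calc f T + lam * ∫ τ in (0:ℝ)..T, f τ
      ≤ f 0 + (∫ τ in (0:ℝ)..T, g τ) + (ε / (1 + lam * T)) * (1 + lam * T) := this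
    _ = f 0 + (∫ τ in (0:ℝ)..T, g τ) + ε := by
        rw [div_mul_cancel₀ _ h1T.ne']
end

section
/- Let c > 0, C > 0, λ > 0, let h : [0,∞) → ℝ be continuous and nonnegative with h² differentiable, and let k : [0,∞) → ℝ be continuous and nonnegative. Assume that for all t ≥ 0: (1/2)(h²)'(t) + c λ² h(t)² ≤ C k(t) h(t). Then there exist constants c' > 0 and C' > 0 depending only on c and C such that for all t ≥ 0: sup_{τ∈[0,t]} ⟨τ⟩² λ³ h(τ)² + c' ∫₀ᵗ ⟨τ⟩² λ⁵ h(τ)² dτ ≤ C' ( λ³ h(0)² + ∫₀ᵗ ⟨τ⟩² λ k(τ)² dτ + ∫₀ᵗ λ h(τ)² dτ ), where ⟨τ⟩ := √(1+τ²). -/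
set_option maxHeartbeats 1000000

open MeasureTheory Set intervalIntegral

/-- weighted-in-time version of the localized low-frequency
energy inequality.  From (1/2)(h²)' + cλ²h² ≤ C k h one deduces, with
constants c', C' depending only on c and C,
sup_{τ∈[0,t]} ⟨τ⟩²λ³h(τ)² + c'∫₀ᵗ ⟨τ⟩²λ⁵h² ≤ C'(λ³h(0)² + ∫₀ᵗ⟨τ⟩²λk² + ∫₀ᵗλh²),
where ⟨τ⟩ = √(1+τ²).  (The supremum bound is expressed as a bound valid for
every τ ∈ [0,t].) -/
theorem weighted_energy_decay_inequality
    (c C : ℝ) (hc : 0 < c) (hC : 0 < C) :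
    ∃ c' C' : ℝ, 0 < c' ∧ 0 < C' ∧
      ∀ (lam : ℝ) (h k d : ℝ → ℝ), 0 < lam →
        ContinuousOn h (Set.Ici 0) → (∀ t : ℝ, 0 ≤ t → 0 ≤ h t) →
        ContinuousOn k (Set.Ici 0) → (∀ t : ℝ, 0 ≤ t → 0 ≤ k t) →
        (∀ t : ℝ, 0 ≤ t →
          HasDerivWithinAt (fun s => h s ^ 2) (d t) (Set.Ici 0) t) →
        (∀ t : ℝ, 0 ≤ t → (1/2) * d t + c * lam ^ 2 * h t ^ 2 ≤ C * k t * h t) →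
        ∀ t : ℝ, 0 ≤ t → ∀ τ ∈ Set.Icc (0:ℝ) t,
          Real.sqrt (1 + τ ^ 2) ^ 2 * lam ^ 3 * h τ ^ 2
            + c' * ∫ s in (0:ℝ)..t, Real.sqrt (1 + s ^ 2) ^ 2 * lam ^ 5 * h s ^ 2
          ≤ C' * (lam ^ 3 * h 0 ^ 2
            + (∫ s in (0:ℝ)..t, Real.sqrt (1 + s ^ 2) ^ 2 * lam * k s ^ 2)
            + ∫ s in (0:ℝ)..t, lam * h s ^ 2) := by
  have hc0 : c ≠ 0 := ne_of_gt hc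
  refine ⟨c/2, 2*(1 + C^2/c + 2/c), by positivity, by positivity, ?_⟩
  intro lam h k d hlam hh hh0 hk hk0 hd hineq t ht τ hτ
  obtain ⟨hτ0, hτt⟩ := hτ
  -- integrands
  set f1 : ℝ → ℝ := fun s => (1+s^2) * h s ^2 with hf1def
  set f2 : ℝ → ℝ := fun s => (1+s^2) * k s ^2 with hf2def
  set E : ℝ → ℝ := fun s => h s ^ 2 with hEdef
  set g : ℝ → ℝ := fun s => c^2*lam^4/2 * f1 s - C^2 * f2 s - 2 * E s with hgdef
  have hEcont : ContinuousOn E (Set.Ici 0) := hh.pow 2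
  have hwcont : ContinuousOn (fun s : ℝ => 1 + s^2) (Set.Ici 0) :=
    (continuous_const.add (continuous_pow 2)).continuousOn
  have hf1cont : ContinuousOn f1 (Set.Ici 0) := hwcont.mul hEcont
  have hf2cont : ContinuousOn f2 (Set.Ici 0) := hwcont.mul (hk.pow 2)
  have hgcont : ContinuousOn g (Set.Ici 0) :=
    ((continuousOn_const.mul hf1cont).sub (continuousOn_const.mul hf2cont)).sub
      (continuousOn_const.mul hEcont)
  have hInt : ∀ (f : ℝ → ℝ), ContinuousOn f (Set.Ici 0) → ∀ x : ℝ, 0 ≤ x →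
      IntervalIntegrable f volume 0 x := by
    intro f hf x hx
    apply (hf.mono ?_).intervalIntegrable
    rw [Set.uIcc_of_le hx]
    exact fun s hs => hs.1
  set φ : ℝ → ℝ := fun x => c*lam^2*((1+x^2) * E x) + ∫ s in (0:ℝ)..x, g s with hφdef
  -- derivative of φ at interior points
  have hder : ∀ x ∈ Set.Ioo (0:ℝ) t,
      HasDerivAt φ (c*lam^2*(2*x*E x + (1+x^2)*d x) + g x) x := by
    intro x hx
    have hEd : HasDerivAt E (d x) x := (hd x hx.1.le).hasDerivAt (Ici_mem_nhds hx.1)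
    have h1 : HasDerivAt (fun y : ℝ => 1+y^2) (2*x) x := by
      simpa using (hasDerivAt_pow 2 x).const_add 1
    have hP : HasDerivAt (fun y : ℝ => c*lam^2*((1+y^2)*E y))
        (c*lam^2*(2*x*E x + (1+x^2)*d x)) x := by
      exact (h1.mul hEd).const_mul (c*lam^2)
    have hIg : HasDerivAt (fun y : ℝ => ∫ s in (0:ℝ)..y, g s) (g x) x :=
      intervalIntegral.integral_hasDerivAt_right (hInt g hgcont x hx.1.le)
        ((hgcont.mono Set.Ioi_subset_Ici_self).stronglyMeasurableAtFilter isOpen_Ioi x hx.1)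
        (hgcont.continuousAt (Ici_mem_nhds hx.1))
    exact hP.add hIg
  -- φ antitone on [0,t]
  have hφanti : AntitoneOn φ (Set.Icc 0 t) := by
    apply antitoneOn_of_deriv_nonpos (convex_Icc 0 t)
    · apply ContinuousOn.add
      · exact (continuousOn_const.mul (hwcont.mul hEcont)).mono Set.Icc_subset_Ici_self
      · have hint : IntegrableOn g (Set.uIcc 0 t) volume := by
          rw [Set.uIcc_of_le ht]
          exact (hgcont.mono Set.Icc_subset_Ici_self).integrableOn_Icc
        have := intervalIntegral.continuousOn_primitive_interval hint
        rwa [Set.uIcc_of_le ht] at this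
    · rw [interior_Icc]
      exact fun x hx => ((hder x hx).differentiableAt).differentiableWithinAt
    · rw [interior_Icc]
      intro x hx
      rw [(hder x hx).deriv]
      have hq := hineq x hx.1.le
      have hq2 : c*lam^2*(1+x^2) * ((1/2) * d x + c * lam ^ 2 * h x ^ 2)
          ≤ c*lam^2*(1+x^2) * (C * k x * h x) :=
        mul_le_mul_of_nonneg_left hq (by positivity)
      simp only [hgdef, hf1def, hf2def, hEdef]
      nlinarith [mul_nonneg (sq_nonneg (c*lam^2*h x - C*k x)) (by positivity : (0:ℝ) ≤ 1+x^2),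
        mul_nonneg (sq_nonneg (c*lam^2*x - 2)) (sq_nonneg (h x)),
        mul_nonneg (mul_nonneg (sq_nonneg c) (sq_nonneg (lam^2))) (sq_nonneg (h x))]
  -- master inequality
  have master : ∀ x : ℝ, 0 ≤ x → x ≤ t →
      c*lam^2*((1+x^2) * E x) + c^2*lam^4/2 * (∫ s in (0:ℝ)..x, f1 s)
        ≤ c*lam^2 * E 0 + C^2 * (∫ s in (0:ℝ)..x, f2 s) + 2 * (∫ s in (0:ℝ)..x, E s) := by
    intro x hx hxt
    have h1 : φ x ≤ φ 0 := hφanti ⟨le_refl 0, ht⟩ ⟨hx, hxt⟩ hx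
    have hsplit : (∫ s in (0:ℝ)..x, g s)
        = c^2*lam^4/2 * (∫ s in (0:ℝ)..x, f1 s) - C^2 * (∫ s in (0:ℝ)..x, f2 s)
          - 2 * (∫ s in (0:ℝ)..x, E s) := by
      have i1 := (hInt f1 hf1cont x hx).const_mul (c^2*lam^4/2)
      have i2 := (hInt f2 hf2cont x hx).const_mul (C^2)
      have i3 := (hInt E hEcont x hx).const_mul (2:ℝ)
      rw [hgdef]
      rw [intervalIntegral.integral_sub (i1.sub i2) i3,
        intervalIntegral.integral_sub i1 i2,
        intervalIntegral.integral_const_mul, intervalIntegral.integral_const_mul,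
        intervalIntegral.integral_const_mul]
    simp only [hφdef] at h1
    rw [hsplit] at h1
    simp only [intervalIntegral.integral_same] at h1
    nlinarith [h1]
  -- nonnegativity and monotonicity of the integrals
  have hJ1 : (0:ℝ) ≤ ∫ s in (0:ℝ)..τ, f1 s :=
    intervalIntegral.integral_nonneg hτ0 (fun u _ => by simp only [hf1def]; positivity)
  have hJk : (0:ℝ) ≤ ∫ s in (0:ℝ)..t, f2 s :=
    intervalIntegral.integral_nonneg ht (fun u _ => by simp only [hf2def]; positivity)
  have hJe : (0:ℝ) ≤ ∫ s in (0:ℝ)..t, E s :=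
    intervalIntegral.integral_nonneg ht (fun u _ => by simp only [hEdef]; positivity)
  have mono2 : (∫ s in (0:ℝ)..τ, f2 s) ≤ ∫ s in (0:ℝ)..t, f2 s :=
    intervalIntegral.integral_mono_interval le_rfl hτ0 hτt
      (Filter.Eventually.of_forall (fun s => by simp only [hf2def]; positivity))
      (hInt f2 hf2cont t ht)
  have mono3 : (∫ s in (0:ℝ)..τ, E s) ≤ ∫ s in (0:ℝ)..t, E s :=
    intervalIntegral.integral_mono_interval le_rfl hτ0 hτt
      (Filter.Eventually.of_forall (fun s => by simp only [hEdef]; positivity))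
      (hInt E hEcont t ht)
  -- base inequalities
  have base1 : c*lam^2*((1+τ^2) * E τ)
      ≤ c*lam^2 * E 0 + C^2 * (∫ s in (0:ℝ)..t, f2 s) + 2 * (∫ s in (0:ℝ)..t, E s) := by
    have hm := master τ hτ0 hτt
    have h01 : (0:ℝ) ≤ c^2*lam^4/2 * (∫ s in (0:ℝ)..τ, f1 s) :=
      mul_nonneg (by positivity) hJ1
    have h02 : C^2 * (∫ s in (0:ℝ)..τ, f2 s) ≤ C^2 * (∫ s in (0:ℝ)..t, f2 s) :=
      mul_le_mul_of_nonneg_left mono2 (sq_nonneg C)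
    have h03 : 2 * (∫ s in (0:ℝ)..τ, E s) ≤ 2 * (∫ s in (0:ℝ)..t, E s) := by linarith
    linarith
  have base2 : c^2*lam^4/2 * (∫ s in (0:ℝ)..t, f1 s)
      ≤ c*lam^2 * E 0 + C^2 * (∫ s in (0:ℝ)..t, f2 s) + 2 * (∫ s in (0:ℝ)..t, E s) := by
    have hm := master t ht le_rfl
    have hE0 : (0:ℝ) ≤ c*lam^2*((1+t^2) * E t) := by
      simp only [hEdef]; positivity
    linarith
  -- scaled versions
  have s1 : lam^3*((1+τ^2) * E τ)
      ≤ lam^3 * E 0 + C^2/c * (lam * ∫ s in (0:ℝ)..t, f2 s)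
        + 2/c * (lam * ∫ s in (0:ℝ)..t, E s) := by
    have h2 := mul_le_mul_of_nonneg_left base1 (le_of_lt (show (0:ℝ) < lam/c by positivity))
    calc lam^3*((1+τ^2) * E τ) = lam/c*(c*lam^2*((1+τ^2) * E τ)) := by field_simp
    _ ≤ lam/c*(c*lam^2 * E 0 + C^2 * (∫ s in (0:ℝ)..t, f2 s)
          + 2 * (∫ s in (0:ℝ)..t, E s)) := h2
    _ = lam^3 * E 0 + C^2/c * (lam * ∫ s in (0:ℝ)..t, f2 s)
          + 2/c * (lam * ∫ s in (0:ℝ)..t, E s) := by field_simp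
  have s2 : c/2*(lam^5 * ∫ s in (0:ℝ)..t, f1 s)
      ≤ lam^3 * E 0 + C^2/c * (lam * ∫ s in (0:ℝ)..t, f2 s)
        + 2/c * (lam * ∫ s in (0:ℝ)..t, E s) := by
    have h2 := mul_le_mul_of_nonneg_left base2 (le_of_lt (show (0:ℝ) < lam/c by positivity))
    calc c/2*(lam^5 * ∫ s in (0:ℝ)..t, f1 s)
        = lam/c*(c^2*lam^4/2 * (∫ s in (0:ℝ)..t, f1 s)) := by field_simp
    _ ≤ lam/c*(c*lam^2 * E 0 + C^2 * (∫ s in (0:ℝ)..t, f2 s)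
          + 2 * (∫ s in (0:ℝ)..t, E s)) := h2
    _ = lam^3 * E 0 + C^2/c * (lam * ∫ s in (0:ℝ)..t, f2 s)
          + 2/c * (lam * ∫ s in (0:ℝ)..t, E s) := by field_simp
  -- rewrite the goal
  have hsq : ∀ s : ℝ, Real.sqrt (1 + s ^ 2) ^ 2 = 1 + s ^ 2 :=
    fun s => Real.sq_sqrt (by positivity)
  simp only [hsq]
  have e1 : (∫ s in (0:ℝ)..t, (1 + s ^ 2) * lam ^ 5 * h s ^ 2)
      = lam^5 * ∫ s in (0:ℝ)..t, f1 s := by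
    rw [← intervalIntegral.integral_const_mul]
    apply intervalIntegral.integral_congr
    intro s _
    simp only [hf1def]
    ring
  have e2 : (∫ s in (0:ℝ)..t, (1 + s ^ 2) * lam * k s ^ 2)
      = lam * ∫ s in (0:ℝ)..t, f2 s := by
    rw [← intervalIntegral.integral_const_mul]
    apply intervalIntegral.integral_congr
    intro s _
    simp only [hf2def]
    ring
  have e3 : (∫ s in (0:ℝ)..t, lam * h s ^ 2) = lam * ∫ s in (0:ℝ)..t, E s := by
    rw [← intervalIntegral.integral_const_mul]
  rw [e1, e2, e3]
  have hu : (0:ℝ) ≤ lam^3 * E 0 := by simp only [hEdef]; positivity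
  have hv : (0:ℝ) ≤ lam * ∫ s in (0:ℝ)..t, f2 s := mul_nonneg hlam.le hJk
  have hw : (0:ℝ) ≤ lam * ∫ s in (0:ℝ)..t, E s := mul_nonneg hlam.le hJe
  have hEτ : (1 + τ ^ 2) * lam ^ 3 * h τ ^ 2 = lam^3*((1+τ^2) * E τ) := by
    simp only [hEdef]; ring
  rw [hEτ]
  have hE00 : lam ^ 3 * h 0 ^ 2 = lam^3 * E 0 := by simp only [hEdef]
  rw [hE00]
  have ha : (0:ℝ) ≤ C^2/c := by positivity
  have hb : (0:ℝ) ≤ 2/c := by positivity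
  set a : ℝ := C^2/c with hadef
  set b : ℝ := 2/c with hbdef
  nlinarith [s1, s2, hu, hv, hw, mul_nonneg ha hu, mul_nonneg hb hu,
    mul_nonneg hb hv, mul_nonneg ha hw]
end

section
/- Let Q, ν : ℝ → ℝ be smooth with ν everywhere nonzero, and let ν̄ > 0. Suppose η̌, v̌ : ℝ × ℝ → ℝ are three times continuously differentiable and satisfy at every point ∂_t η̌ − ∂_y v̌ = 0 and ν̄⁻² ∂_t v̌ + ∂_y(Q(η̌)) − ν̄⁻¹ ∂_y(ν(η̌) ∂_y v̌) = 0. Define ν̃(s) := ν̄⁻¹ ν(s) and W(t,y) := ∂_y v̌(t,y) − (Q/ν̃)(η̌(t,y)). Then at every point (t,y): ∂_t W − ν̄² ∂_y²( ν̃(η̌) W ) = −(Q/ν̃)'(η̌) ∂_y v̌. -/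
private lemma slice_t {E : Type*} [NormedAddCommGroup E] [NormedSpace ℝ E]
    {g : ℝ × ℝ → E} {a b : ℝ} (hg : DifferentiableAt ℝ g (a, b)) :
    HasDerivAt (fun s => g (s, b)) (fderiv ℝ g (a, b) (1, 0)) a :=
  hg.hasFDerivAt.comp_hasDerivAt a (HasDerivAt.prodMk (hasDerivAt_id a) (hasDerivAt_const a b))

private lemma slice_y {E : Type*} [NormedAddCommGroup E] [NormedSpace ℝ E]
    {g : ℝ × ℝ → E} {a b : ℝ} (hg : DifferentiableAt ℝ g (a, b)) :
    HasDerivAt (fun z => g (a, z)) (fderiv ℝ g (a, b) (0, 1)) b :=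
  hg.hasFDerivAt.comp_hasDerivAt b (HasDerivAt.prodMk (hasDerivAt_const b a) (hasDerivAt_id b))

/-- for the diffusively rescaled Lagrangian system, the quantity
W = v̌_y − (Q/ν̃)(η̌) (with ν̃ = ν̄⁻¹ν) satisfies the parabolic equation
W_t − ν̄²(ν̃(η̌)W)_yy = −(Q/ν̃)'(η̌) v̌_y. -/
theorem diffusive_effective_flux_equation
    (Q ν : ℝ → ℝ) (hQ : ContDiff ℝ (⊤ : ℕ∞) Q) (hν : ContDiff ℝ (⊤ : ℕ∞) ν)
    (hν0 : ∀ s : ℝ, ν s ≠ 0) (nubar : ℝ) (hnubar : 0 < nubar)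
    (η v : ℝ × ℝ → ℝ) (hη : ContDiff ℝ 3 η) (hv : ContDiff ℝ 3 v)
    (heq1 : ∀ t y : ℝ,
      deriv (fun s => η (s, y)) t - deriv (fun z => v (t, z)) y = 0)
    (heq2 : ∀ t y : ℝ,
      (nubar ^ 2)⁻¹ * deriv (fun s => v (s, y)) t
        + deriv (fun z => Q (η (t, z))) y
        - nubar⁻¹ * deriv (fun z => ν (η (t, z)) * deriv (fun w => v (t, w)) z) y
      = 0)
    (W : ℝ × ℝ → ℝ)
    (hW : ∀ t y : ℝ, W (t, y) = deriv (fun z => v (t, z)) y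
      - Q (η (t, y)) / (nubar⁻¹ * ν (η (t, y)))) :
    ∀ t y : ℝ,
      deriv (fun s => W (s, y)) t
        - nubar ^ 2
          * deriv (fun z => deriv (fun w => nubar⁻¹ * ν (η (t, w)) * W (t, w)) z) y
      = -(deriv (fun s => Q s / (nubar⁻¹ * ν s)) (η (t, y)))
          * deriv (fun z => v (t, z)) y := by
  intro t y
  have hvd : Differentiable ℝ v := hv.differentiable (by norm_num)
  have hηd : Differentiable ℝ η := hη.differentiable (by norm_num)
  have hQd : Differentiable ℝ Q := hQ.differentiable (by simp)
  have hνd : Differentiable ℝ ν := hν.differentiable (by simp)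
  set F := fderiv ℝ v with hFdef
  have hFc : ContDiff ℝ 2 F := hv.fderiv_right (by norm_num)
  have hFd : Differentiable ℝ F := hFc.differentiable (by norm_num)
  set G : ℝ → ℝ := fun s => Q s / (nubar⁻¹ * ν s) with hGdef
  have hne : ∀ s : ℝ, nubar⁻¹ * ν s ≠ 0 :=
    fun s => mul_ne_zero (inv_ne_zero hnubar.ne') (hν0 s)
  have hGd : Differentiable ℝ G :=
    fun s => ((hQd s).div ((hνd s).const_mul _) (hne s))
  -- key partial derivatives
  have key1 : ∀ a b : ℝ, deriv (fun z => v (a, z)) b = F (a, b) (0, 1) :=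
    fun a b => (slice_y (hvd (a, b))).deriv
  have key2 : ∀ a b : ℝ, deriv (fun s => v (s, b)) a = F (a, b) (1, 0) :=
    fun a b => (slice_t (hvd (a, b))).deriv
  -- slices of η
  have hηslice : ∀ b : ℝ, Differentiable ℝ (fun w : ℝ => η (t, w)) := by
    intro b
    exact hηd.comp ((differentiable_const t).prodMk differentiable_id)
  -- differentiability of w ↦ F (t, w) (0,1)
  have hFy : Differentiable ℝ (fun w : ℝ => F (t, w) ((0 : ℝ), (1 : ℝ))) := by
    have h1 : Differentiable ℝ (fun w : ℝ => F (t, w)) :=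
      hFd.comp ((differentiable_const t).prodMk differentiable_id)
    exact h1.clm_apply (differentiable_const _)
  -- Clairaut
  have hsymm : (fderiv ℝ F (t, y)) (1, 0) (0, 1) = (fderiv ℝ F (t, y)) (0, 1) (1, 0) :=
    second_derivative_symmetric (fun p => (hvd p).hasFDerivAt)
      ((hFd (t, y)).hasFDerivAt) _ _
  -- heq1 at (t, y)
  have hη1 : fderiv ℝ η (t, y) (1, 0) = F (t, y) (0, 1) := by
    have h := heq1 t y
    rw [(slice_t (hηd (t, y))).deriv, key1] at h
    linarith
  -- term 1 : time derivative of W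
  have e1 : deriv (fun s => W (s, y)) t
      = (fderiv ℝ F (t, y)) (1, 0) (0, 1)
        - deriv G (η (t, y)) * (F (t, y) (0, 1)) := by
    have hWfun : (fun s => W (s, y)) = fun s => F (s, y) (0, 1) - G (η (s, y)) := by
      funext s
      rw [hW, key1]
    rw [hWfun]
    have h1 : HasDerivAt (fun s => F (s, y) ((0 : ℝ), (1 : ℝ)))
        ((fderiv ℝ F (t, y)) (1, 0) (0, 1)) t := by
      have hc : HasDerivAt (fun s => F (s, y)) (fderiv ℝ F (t, y) (1, 0)) t :=
        slice_t (hFd (t, y))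
      have := hc.clm_apply (hasDerivAt_const t ((0 : ℝ), (1 : ℝ)))
      simpa using this
    have h2 : HasDerivAt (fun s => G (η (s, y)))
        (deriv G (η (t, y)) * (F (t, y) (0, 1))) t := by
      have hηs : HasDerivAt (fun s => η (s, y)) (F (t, y) (0, 1)) t := by
        have := slice_t (hηd (t, y))
        rwa [hη1] at this
      exact (hGd (η (t, y))).hasDerivAt.comp t hηs
    exact (h1.sub h2).deriv
  -- inner spatial derivative computation
  have inner_deriv : ∀ z : ℝ,
      deriv (fun w => nubar⁻¹ * ν (η (t, w)) * W (t, w)) z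
        = (nubar ^ 2)⁻¹ * F (t, z) (1, 0) := by
    intro z
    have hfun : (fun w => nubar⁻¹ * ν (η (t, w)) * W (t, w))
        = fun w => nubar⁻¹ * (ν (η (t, w)) * deriv (fun z' => v (t, z')) w)
            - Q (η (t, w)) := by
      funext w
      rw [hW, mul_sub, ← mul_div_assoc, mul_div_cancel_left₀ _ (hne _), mul_assoc]
    rw [hfun]
    have hprod : (fun w => ν (η (t, w)) * deriv (fun z' => v (t, z')) w)
        = fun w => ν (η (t, w)) * F (t, w) (0, 1) := by
      funext w; rw [key1]
    have hdg : DifferentiableAt ℝ (fun w => Q (η (t, w))) z :=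
      (hQd _).comp z ((hηslice z) z)
    have hdfg : DifferentiableAt ℝ
        (fun w => ν (η (t, w)) * deriv (fun z' => v (t, z')) w) z := by
      rw [hprod]
      exact (((hνd _).comp z ((hηslice z) z)).mul (hFy z))
    have hdf : DifferentiableAt ℝ
        (fun w => nubar⁻¹ * (ν (η (t, w)) * deriv (fun z' => v (t, z')) w)) z :=
      hdfg.const_mul _
    rw [deriv_fun_sub hdf hdg, deriv_const_mul _ hdfg]
    have h2' := heq2 t z
    rw [key2] at h2'
    linarith
  -- term 2 : the second-order spatial term
  have e2 : deriv (fun z => deriv (fun w => nubar⁻¹ * ν (η (t, w)) * W (t, w)) z) y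
      = (nubar ^ 2)⁻¹ * ((fderiv ℝ F (t, y)) (0, 1) (1, 0)) := by
    rw [show (fun z => deriv (fun w => nubar⁻¹ * ν (η (t, w)) * W (t, w)) z)
        = fun z => (nubar ^ 2)⁻¹ * F (t, z) (1, 0) from funext inner_deriv]
    have h3 : HasDerivAt (fun z => F (t, z) ((1 : ℝ), (0 : ℝ)))
        ((fderiv ℝ F (t, y)) (0, 1) (1, 0)) y := by
      have hc : HasDerivAt (fun z => F (t, z)) (fderiv ℝ F (t, y) (0, 1)) y :=
        slice_y (hFd (t, y))
      have := hc.clm_apply (hasDerivAt_const y ((1 : ℝ), (0 : ℝ)))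
      simpa using this
    exact (h3.const_mul _).deriv
  rw [e1, e2, key1]
  have hn2 : (nubar : ℝ) ^ 2 ≠ 0 := pow_ne_zero 2 hnubar.ne'
  rw [hsymm, mul_inv_cancel_left₀ hn2]
  ring
end
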